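/- Let G be a graph on 2n vertices with minimum degree at least n that contains at least one perfect matching. Then the number of perfect matchings of G is at least 1/(2n^2) times the number of near-perfect matchings, i.e., |M_n(G)| / |M_{n-1}(G)| ≥ 1/(2n^2) (where M_{n-1}(G) is nonempty; equivalently |M_{n-1}(G)| ≤ 2n^2 |M_n(G)|). -/

import Mathlib

/-- `M` is a matching of the simple graph `G`. -/
def IsMatchingOf {V : Type*} (G : SimpleGraph V) (M : Finset (Sym2 V)) : Prop :=
  (∀ e ∈ M, e ∈ G.edgeSet) ∧
  ∀ e ∈ M, ∀ f ∈ M, e ≠ f → ∀ v, v ∈ e → v ∉ f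


open Finset
variable {V : Type*} [DecidableEq V]

def ef : Sym2 V → Finset V := Sym2.lift ⟨fun a b => {a,b}, fun a b => by simp [Finset.pair_comm]⟩

@[simp] lemma ef_mk (x y : V) : ef s(x,y) = {x,y} := rfl

lemma mem_ef {v : V} {e : Sym2 V} : v ∈ ef e ↔ v ∈ e := by
  induction e using Sym2.ind with | _ x y => simp [Sym2.mem_iff]
variable {G : SimpleGraph V} {M N : Finset (Sym2 V)}

lemma ef_card (hM : IsMatchingOf G M) {e : Sym2 V} (he : e ∈ M) : (ef e).card = 2 := by
  induction e using Sym2.ind with | _ x y =>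
    have hne : x ≠ y := by
      have := G.not_isDiag_of_mem_edgeSet (hM.1 _ he)
      simpa [Sym2.mk_isDiag_iff] using this
    simpa using Finset.card_pair hne

lemma cover_card (hM : IsMatchingOf G M) : (M.biUnion ef).card = 2 * M.card := by
  rw [Finset.card_biUnion]
  · rw [Finset.sum_congr rfl (fun e he => ef_card hM he)]
    simp [mul_comm]
  · intro e he f hf hef
    rw [Function.onFun, Finset.disjoint_left]
    intro v hv
    rw [mem_ef] at *
    exact fun h => hM.2 e he f hf hef v hv h

def P (G : SimpleGraph V) (M N : Finset (Sym2 V)) (u v : V) : Prop :=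
  u ≠ v ∧ (∀ e ∈ M, u ∉ e) ∧ (∀ e ∈ M, v ∉ e) ∧
  ((N = insert s(u,v) M) ∨
   ∃ x y, s(x,y) ∈ M ∧ G.Adj u x ∧ G.Adj v y ∧
     N = insert s(u,x) (insert s(v,y) (M.erase s(x,y))))

lemma P.swap {u v : V} (h : P G M N u v) : P G M N v u := by
  obtain ⟨huv, hu, hv, hc⟩ := h
  refine ⟨huv.symm, hv, hu, ?_⟩
  rcases hc with h | ⟨x, y, hxy, hux, hvy, hN⟩
  · left; rwa [Sym2.eq_swap] at h
  · right; exact ⟨y, x, by rwa [Sym2.eq_swap] at hxy, hvy, hux,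
      by rw [hN, show s(y,x) = s(x,y) from Sym2.eq_swap, Finset.insert_comm]⟩

lemma insert_inj {a : Sym2 V} {s t : Finset (Sym2 V)} (h : insert a s = insert a t)
    (hs : a ∉ s) (ht : a ∉ t) : s = t := by
  rw [← Finset.erase_insert hs, h, Finset.erase_insert ht]

lemma mixed_false {u v x y : V} {M₁ M₂ : Finset (Sym2 V)} (huv : u ≠ v)
    (hu₂ : ∀ e ∈ M₂, u ∉ e) (hv₂ : ∀ e ∈ M₂, v ∉ e)
    (h1 : N = insert s(u,v) M₁) (hxy : s(x,y) ∈ M₂)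
    (h2 : N = insert s(u,x) (insert s(v,y) (M₂.erase s(x,y)))) : False := by
  have hm : s(u,v) ∈ N := h1 ▸ Finset.mem_insert_self _ _
  rw [h2, Finset.mem_insert, Finset.mem_insert] at hm
  have hvx : v ≠ x := fun h => hv₂ _ hxy (h ▸ Sym2.mem_mk_left x y)
  have huy : u ≠ y := fun h => hu₂ _ hxy (h ▸ Sym2.mem_mk_right x y)
  rcases hm with h | h | h
  · rw [Sym2.eq_iff] at h
    rcases h with ⟨-, h⟩ | ⟨-, h⟩
    · exact hvx h
    · exact huv h.symm
  · rw [Sym2.eq_iff] at h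
    rcases h with ⟨h, -⟩ | ⟨h, -⟩
    · exact huv h
    · exact huy h
  · exact hu₂ _ (Finset.mem_of_mem_erase h) (Sym2.mem_mk_left u v)

lemma P.unique {u v : V} (hN : IsMatchingOf G N) {M₁ M₂ : Finset (Sym2 V)}
    (h1 : P G M₁ N u v) (h2 : P G M₂ N u v) : M₁ = M₂ := by
  obtain ⟨huv, hu₁, hv₁, hc₁⟩ := h1
  obtain ⟨-, hu₂, hv₂, hc₂⟩ := h2
  have hnot : ∀ (M : Finset (Sym2 V)), (∀ e ∈ M, u ∉ e) → s(u,v) ∉ M :=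
    fun M hM h => hM _ h (Sym2.mem_mk_left u v)
  rcases hc₁ with hN₁ | ⟨x₁, y₁, hxy₁, hux₁, hvy₁, hN₁⟩ <;>
    rcases hc₂ with hN₂ | ⟨x₂, y₂, hxy₂, hux₂, hvy₂, hN₂⟩
  · exact insert_inj (hN₁ ▸ hN₂) (hnot _ hu₁) (hnot _ hu₂)
  · exact absurd (mixed_false huv hu₂ hv₂ hN₁ hxy₂ hN₂) not_false
  · exact absurd (mixed_false huv hu₁ hv₁ hN₂ hxy₁ hN₁) not_false
  · -- both case 2
    have hux₁' : u ≠ x₁ := fun h => hu₁ _ hxy₁ (h ▸ Sym2.mem_mk_left x₁ y₁)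
    have hux₂' : u ≠ x₂ := fun h => hu₂ _ hxy₂ (h ▸ Sym2.mem_mk_left x₂ y₂)
    have huy₁' : u ≠ y₁ := fun h => hu₁ _ hxy₁ (h ▸ Sym2.mem_mk_right x₁ y₁)
    have hvy₁' : v ≠ y₁ := fun h => hv₁ _ hxy₁ (h ▸ Sym2.mem_mk_right x₁ y₁)
    have hvy₂' : v ≠ y₂ := fun h => hv₂ _ hxy₂ (h ▸ Sym2.mem_mk_right x₂ y₂)
    have hm₁ : s(u,x₁) ∈ N := hN₁ ▸ Finset.mem_insert_self _ _
    have hm₂ : s(u,x₂) ∈ N := hN₂ ▸ Finset.mem_insert_self _ _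
    have hx : x₁ = x₂ := by
      by_contra hne
      have hne' : s(u,x₁) ≠ s(u,x₂) := by
        simp only [ne_eq, Sym2.eq_iff]
        push_neg
        exact ⟨fun _ => hne, fun h => absurd h hux₂'⟩
      exact hN.2 _ hm₁ _ hm₂ hne' u (Sym2.mem_mk_left u x₁) (Sym2.mem_mk_left u x₂)
    have hm₁' : s(v,y₁) ∈ N := hN₁ ▸ Finset.mem_insert_of_mem (Finset.mem_insert_self _ _)
    have hm₂' : s(v,y₂) ∈ N := hN₂ ▸ Finset.mem_insert_of_mem (Finset.mem_insert_self _ _)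
    have hy : y₁ = y₂ := by
      by_contra hne
      have hne' : s(v,y₁) ≠ s(v,y₂) := by
        simp only [ne_eq, Sym2.eq_iff]
        push_neg
        exact ⟨fun _ => hne, fun h => absurd h hvy₂'⟩
      exact hN.2 _ hm₁' _ hm₂' hne' v (Sym2.mem_mk_left v y₁) (Sym2.mem_mk_left v y₂)
    subst hx; subst hy
    have ha : ∀ (M : Finset (Sym2 V)), (∀ e ∈ M, u ∉ e) →
        s(u,x₁) ∉ insert s(v,y₁) (M.erase s(x₁,y₁)) := by
      intro M hM h
      rcases Finset.mem_insert.1 h with h | h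
      · rw [Sym2.eq_iff] at h
        rcases h with ⟨h, -⟩ | ⟨h, -⟩
        · exact huv h
        · exact huy₁' h
      · exact hM _ (Finset.mem_of_mem_erase h) (Sym2.mem_mk_left u x₁)
    have hb : ∀ (M : Finset (Sym2 V)), (∀ e ∈ M, v ∉ e) → s(v,y₁) ∉ M.erase s(x₁,y₁) :=
      fun M hM h => hM _ (Finset.mem_of_mem_erase h) (Sym2.mem_mk_left v y₁)
    have h3 := insert_inj (hN₁ ▸ hN₂) (ha _ hu₁) (ha _ hu₂)
    have h4 := insert_inj h3 (hb _ hv₁) (hb _ hv₂)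
    rw [← Finset.insert_erase hxy₁, ← Finset.insert_erase hxy₂, h4]

lemma case1_good {u v : V} {n : ℕ} (hM : IsMatchingOf G M) (hMc : M.card = n - 1) (hn : 0 < n)
    (huv : u ≠ v) (hu : ∀ e ∈ M, u ∉ e) (hv : ∀ e ∈ M, v ∉ e) (hadj : G.Adj u v) :
    IsMatchingOf G (insert s(u,v) M) ∧ (insert s(u,v) M).card = n := by
  have hnm : s(u,v) ∉ M := fun h => hu _ h (Sym2.mem_mk_left u v)
  refine ⟨⟨?_, ?_⟩, ?_⟩
  · intro e he
    rcases Finset.mem_insert.1 he with rfl | he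
    · exact hadj
    · exact hM.1 _ he
  · intro e he f hf hef w hwe hwf
    rcases Finset.mem_insert.1 he with rfl | heM <;> rcases Finset.mem_insert.1 hf with rfl | hfM
    · exact hef rfl
    · rcases Sym2.mem_iff.1 hwe with h | h
      · exact hu _ hfM (h ▸ hwf)
      · exact hv _ hfM (h ▸ hwf)
    · rcases Sym2.mem_iff.1 hwf with h | h
      · exact hu _ heM (h ▸ hwe)
      · exact hv _ heM (h ▸ hwe)
    · exact hM.2 _ heM _ hfM hef w hwe hwf
  · rw [Finset.card_insert_of_notMem hnm, hMc]; omega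

lemma case2_good {u v x y : V} {n : ℕ} (hM : IsMatchingOf G M) (hMc : M.card = n - 1)
    (hn : 0 < n) (huv : u ≠ v) (hu : ∀ e ∈ M, u ∉ e) (hv : ∀ e ∈ M, v ∉ e)
    (hxy : s(x,y) ∈ M) (hux : G.Adj u x) (hvy : G.Adj v y) :
    IsMatchingOf G (insert s(u,x) (insert s(v,y) (M.erase s(x,y)))) ∧
      (insert s(u,x) (insert s(v,y) (M.erase s(x,y)))).card = n := by
  have hxne : x ≠ y := by
    have := G.not_isDiag_of_mem_edgeSet (hM.1 _ hxy)
    simpa [Sym2.mk_isDiag_iff] using this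
  have hux' : u ≠ x := fun h => hu _ hxy (h ▸ Sym2.mem_mk_left x y)
  have huy' : u ≠ y := fun h => hu _ hxy (h ▸ Sym2.mem_mk_right x y)
  have hvx' : v ≠ x := fun h => hv _ hxy (h ▸ Sym2.mem_mk_left x y)
  have hvy' : v ≠ y := fun h => hv _ hxy (h ▸ Sym2.mem_mk_right x y)
  -- memberships of vertices in edges of the erase set
  have herase : ∀ e ∈ M.erase s(x,y), u ∉ e ∧ v ∉ e ∧ x ∉ e ∧ y ∉ e := by
    intro e he
    obtain ⟨hne, heM⟩ := Finset.mem_erase.1 he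
    exact ⟨hu _ heM, hv _ heM,
      fun h => hM.2 _ hxy _ heM hne.symm x (Sym2.mem_mk_left x y) h,
      fun h => hM.2 _ hxy _ heM hne.symm y (Sym2.mem_mk_right x y) h⟩
  have h1 : s(v,y) ∉ M.erase s(x,y) := fun h => (herase _ h).2.1 (Sym2.mem_mk_left v y)
  have h2 : s(u,x) ∉ insert s(v,y) (M.erase s(x,y)) := by
    intro h
    rcases Finset.mem_insert.1 h with h | h
    · rw [Sym2.eq_iff] at h
      rcases h with ⟨h, -⟩ | ⟨h, -⟩
      · exact huv h
      · exact huy' h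
    · exact (herase _ h).1 (Sym2.mem_mk_left u x)
  constructor
  · constructor
    · intro e he
      rcases Finset.mem_insert.1 he with rfl | he
      · exact hux
      rcases Finset.mem_insert.1 he with rfl | he
      · exact hvy
      · exact hM.1 _ (Finset.mem_of_mem_erase he)
    · intro e he f hf hef w hwe hwf
      have key : ∀ g ∈ insert s(u,x) (insert s(v,y) (M.erase s(x,y))),
          g = s(u,x) ∨ g = s(v,y) ∨ g ∈ M.erase s(x,y) := by
        intro g hg
        rcases Finset.mem_insert.1 hg with h | hg
        · exact Or.inl h
        rcases Finset.mem_insert.1 hg with h | hg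
        · exact Or.inr (Or.inl h)
        · exact Or.inr (Or.inr hg)
      have hd1 : ∀ w, w ∈ s(u,x) → w ∉ s(v,y) := by
        intro w hw hw'
        rcases Sym2.mem_iff.1 hw with h | h <;> rcases Sym2.mem_iff.1 hw' with h' | h'
        · exact huv (h ▸ h' ▸ rfl)
        · exact huy' (h ▸ h' ▸ rfl)
        · exact hvx' (by rw [← h', h])
        · exact hxne (by rw [← h, h'])
      have hd2 : ∀ g ∈ M.erase s(x,y), ∀ w, w ∈ s(u,x) → w ∉ g := by
        intro g hg w hw hw'
        rcases Sym2.mem_iff.1 hw with h | h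
        · exact (herase _ hg).1 (h ▸ hw')
        · exact (herase _ hg).2.2.1 (h ▸ hw')
      have hd3 : ∀ g ∈ M.erase s(x,y), ∀ w, w ∈ s(v,y) → w ∉ g := by
        intro g hg w hw hw'
        rcases Sym2.mem_iff.1 hw with h | h
        · exact (herase _ hg).2.1 (h ▸ hw')
        · exact (herase _ hg).2.2.2 (h ▸ hw')
      rcases key e he with rfl | rfl | heM <;> rcases key f hf with rfl | rfl | hfM
      · exact hef rfl
      · exact hd1 w hwe hwf
      · exact hd2 _ hfM w hwe hwf
      · exact hd1 w hwf hwe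
      · exact hef rfl
      · exact hd3 _ hfM w hwe hwf
      · exact hd2 _ heM w hwf hwe
      · exact hd3 _ heM w hwf hwe
      · exact hM.2 _ (Finset.mem_of_mem_erase heM) _ (Finset.mem_of_mem_erase hfM)
          hef w hwe hwf
  · have hMpos : 1 ≤ M.card := Finset.card_pos.2 ⟨_, hxy⟩
    rw [Finset.card_insert_of_notMem h2, Finset.card_insert_of_notMem h1,
      Finset.card_erase_of_mem hxy, hMc]
    omega

lemma exists_step [Fintype V] [DecidableRel G.Adj] {n : ℕ} (hcard : Fintype.card V = 2 * n) (hn : 0 < n)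
    (hdeg : ∀ v : V, n ≤ (Finset.univ.filter (G.Adj v)).card)
    (hM : IsMatchingOf G M) (hMc : M.card = n - 1) :
    ∃ N u v, IsMatchingOf G N ∧ N.card = n ∧ P G M N u v := by
  set C : Finset V := M.biUnion ef with hCdef
  have hC : C.card = 2 * (n - 1) := by rw [hCdef, cover_card hM, hMc]
  have hU : Cᶜ.card = 2 := by
    rw [Finset.card_compl, hC, hcard]; omega
  obtain ⟨u, v, huv, hUeq⟩ := Finset.card_eq_two.1 hU
  have hmemC : ∀ w, w ∈ C ↔ ∃ e ∈ M, w ∈ e := by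
    intro w; simp [hCdef, Finset.mem_biUnion, mem_ef]
  have hu : ∀ e ∈ M, u ∉ e := by
    have : u ∉ C := by
      have : u ∈ Cᶜ := hUeq ▸ Finset.mem_insert_self _ _
      simpa [Finset.mem_compl] using this
    intro e he heu
    exact this ((hmemC u).2 ⟨e, he, heu⟩)
  have hv : ∀ e ∈ M, v ∉ e := by
    have : v ∉ C := by
      have : v ∈ Cᶜ := hUeq ▸ Finset.mem_insert_of_mem (Finset.mem_singleton_self _)
      simpa [Finset.mem_compl] using this
    intro e he hev
    exact this ((hmemC v).2 ⟨e, he, hev⟩)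
  have hcov : ∀ w : V, w ≠ u → w ≠ v → w ∈ C := by
    intro w hwu hwv
    by_contra h
    have : w ∈ Cᶜ := Finset.mem_compl.2 h
    rw [hUeq] at this
    rcases Finset.mem_insert.1 this with h | h
    · exact hwu h
    · exact hwv (Finset.mem_singleton.1 h)
  by_cases hadj : G.Adj u v
  · obtain ⟨h1, h2⟩ := case1_good hM hMc hn huv hu hv hadj
    exact ⟨_, u, v, h1, h2, huv, hu, hv, Or.inl rfl⟩
  · -- counting argument
    set Nu : Finset V := Finset.univ.filter (G.Adj u) with hNu
    set Nv : Finset V := Finset.univ.filter (G.Adj v) with hNv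
    have hNuC : Nu ⊆ C := by
      intro w hw
      have hadjw : G.Adj u w := by simpa [hNu] using hw
      exact hcov w (fun h => G.irrefl (h ▸ hadjw)) (fun h => hadj (h ▸ hadjw))
    have hNvC : Nv ⊆ C := by
      intro w hw
      have hadjw : G.Adj v w := by simpa [hNv] using hw
      exact hcov w (fun h => (hadj (h ▸ hadjw).symm)) (fun h => G.irrefl (h ▸ hadjw))
    have hdisj : ∀ e ∈ M, ∀ f ∈ M, e ≠ f → Disjoint (ef e) (ef f) := by
      intro e he f hf hef
      rw [Finset.disjoint_left]
      intro w hw hw'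
      exact hM.2 e he f hf hef w (mem_ef.1 hw) (mem_ef.1 hw')
    have hsumNu : ∑ e ∈ M, (ef e ∩ Nu).card = Nu.card := by
      rw [← Finset.card_biUnion (fun e he f hf hef =>
        Finset.disjoint_of_subset_left Finset.inter_subset_left
          (Finset.disjoint_of_subset_right Finset.inter_subset_left (hdisj e he f hf hef)))]
      congr 1
      rw [← Finset.biUnion_inter]
      exact Finset.inter_eq_right.2 hNuC
    have hsumNv : ∑ e ∈ M, (ef e ∩ Nv).card = Nv.card := by
      rw [← Finset.card_biUnion (fun e he f hf hef =>
        Finset.disjoint_of_subset_left Finset.inter_subset_left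
          (Finset.disjoint_of_subset_right Finset.inter_subset_left (hdisj e he f hf hef)))]
      congr 1
      rw [← Finset.biUnion_inter]
      exact Finset.inter_eq_right.2 hNvC
    have hlt : ∑ e ∈ M, 2 < ∑ e ∈ M, ((ef e ∩ Nu).card + (ef e ∩ Nv).card) := by
      rw [Finset.sum_add_distrib, hsumNu, hsumNv, Finset.sum_const, hMc, smul_eq_mul]
      have h1 := hdeg u
      have h2 := hdeg v
      rw [← hNu] at h1
      rw [← hNv] at h2
      omega
    obtain ⟨e, he, hegt⟩ := Finset.exists_lt_of_sum_lt hlt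
    induction e using Sym2.ind with
    | _ x y =>
    have hxne : x ≠ y := by
      have := G.not_isDiag_of_mem_edgeSet (hM.1 _ he)
      simpa [Sym2.mk_isDiag_iff] using this
    have hcNu : (ef s(x,y) ∩ Nu).card =
        (if G.Adj u x then 1 else 0) + (if G.Adj u y then 1 else 0) := by
      have : ef s(x,y) ∩ Nu = ({x,y} : Finset V).filter (G.Adj u) := by
        ext w; simp [hNu, Finset.mem_inter, Finset.mem_filter, and_comm]
      rw [this, Finset.filter_insert, Finset.filter_singleton]
      by_cases hx : G.Adj u x <;> by_cases hy : G.Adj u y <;>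
        simp [hx, hy, Finset.card_insert_of_notMem, hxne]
    have hcNv : (ef s(x,y) ∩ Nv).card =
        (if G.Adj v x then 1 else 0) + (if G.Adj v y then 1 else 0) := by
      have : ef s(x,y) ∩ Nv = ({x,y} : Finset V).filter (G.Adj v) := by
        ext w; simp [hNv, Finset.mem_inter, Finset.mem_filter, and_comm]
      rw [this, Finset.filter_insert, Finset.filter_singleton]
      by_cases hx : G.Adj v x <;> by_cases hy : G.Adj v y <;>
        simp [hx, hy, Finset.card_insert_of_notMem, hxne]
    rw [hcNu, hcNv] at hegt
    have key : (G.Adj u x ∧ G.Adj v y) ∨ (G.Adj u y ∧ G.Adj v x) := by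
      by_cases h1 : G.Adj u x <;> by_cases h2 : G.Adj u y <;>
        by_cases h3 : G.Adj v x <;> by_cases h4 : G.Adj v y <;>
        simp only [h1, h2, h3, h4, if_pos, if_neg, if_true, if_false,
          not_false_eq_true, ite_true, ite_false] at hegt <;>
        first
          | omega
          | exact Or.inl ⟨h1, h4⟩
          | exact Or.inr ⟨h2, h3⟩
    rcases key with ⟨hux, hvy⟩ | ⟨huy, hvx⟩
    · obtain ⟨h1, h2⟩ := case2_good hM hMc hn huv hu hv he hux hvy
      exact ⟨_, u, v, h1, h2, huv, hu, hv, Or.inr ⟨x, y, he, hux, hvy, rfl⟩⟩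
    · have he' : s(y,x) ∈ M := by rwa [Sym2.eq_swap]
      obtain ⟨h1, h2⟩ := case2_good hM hMc hn huv hu hv he' huy hvx
      exact ⟨_, u, v, h1, h2, huv, hu, hv, Or.inr ⟨y, x, he', huy, hvx, rfl⟩⟩

/-- Let `G` be a graph on `2n` vertices with minimum degree at least `n` that
contains at least one perfect matching (a matching of size `n`). Then the number
of near-perfect matchings (size `n-1`) is at most `2 n^2` times the number of
perfect matchings, i.e. `|M_n(G)| / |M_{n-1}(G)| ≥ 1/(2n^2)`. -/
theorem stmt4 (n : ℕ) (hn : 0 < n) (G : SimpleGraph (Fin (2 * n)))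
    (hdeg : ∀ v : Fin (2 * n), n ≤ Nat.card {w // G.Adj v w})
    (hpm : ∃ M : Finset (Sym2 (Fin (2 * n))), IsMatchingOf G M ∧ M.card = n) :
    Nat.card {M : Finset (Sym2 (Fin (2 * n))) // IsMatchingOf G M ∧ M.card = n - 1}
      ≤ 2 * n ^ 2 *
        Nat.card {M : Finset (Sym2 (Fin (2 * n))) // IsMatchingOf G M ∧ M.card = n} := by
  classical
  have hdeg' : ∀ v : Fin (2 * n), n ≤ (Finset.univ.filter (G.Adj v)).card := by
    intro v
    have := hdeg v
    rwa [Nat.card_eq_fintype_card, Fintype.card_subtype] at this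
  have hcard : Fintype.card (Fin (2 * n)) = 2 * n := Fintype.card_fin _
  -- the injection
  have hex : ∀ M : {M : Finset (Sym2 (Fin (2 * n))) // IsMatchingOf G M ∧ M.card = n - 1},
      ∃ N u v, IsMatchingOf G N ∧ N.card = n ∧ P G M.1 N u v :=
    fun M => exists_step hcard hn hdeg' M.2.1 M.2.2
  choose N u v hNm hNc hP using hex
  let f : {M : Finset (Sym2 (Fin (2 * n))) // IsMatchingOf G M ∧ M.card = n - 1} →
      {p : Sym2 (Fin (2 * n)) // ¬p.IsDiag} ×
      {M : Finset (Sym2 (Fin (2 * n))) // IsMatchingOf G M ∧ M.card = n} := fun M =>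
    (⟨s(u M, v M), by simpa [Sym2.mk_isDiag_iff] using (hP M).1⟩, ⟨N M, hNm M, hNc M⟩)
  have hinj : Function.Injective f := by
    intro M₁ M₂ h
    have h1 : s(u M₁, v M₁) = s(u M₂, v M₂) := Subtype.ext_iff.1 (congrArg Prod.fst h)
    have hNN : N M₁ = N M₂ := Subtype.ext_iff.1 (congrArg Prod.snd h)
    have hP1 := hP M₁
    have hP2 := hP M₂
    rw [hNN] at hP1
    apply Subtype.ext
    rw [Sym2.eq_iff] at h1
    rcases h1 with ⟨hu, hv⟩ | ⟨hu, hv⟩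
    · rw [hu, hv] at hP1
      exact P.unique (hNm M₂) hP1 hP2
    · rw [hu, hv] at hP1
      exact P.unique (hNm M₂) hP1.swap hP2
  have hle := Nat.card_le_card_of_injective f hinj
  rw [Nat.card_prod] at hle
  have hc : Nat.card {p : Sym2 (Fin (2 * n)) // ¬p.IsDiag} = (2 * n).choose 2 := by
    rw [Nat.card_eq_fintype_card, Sym2.card_subtype_not_diag, hcard]
  rw [hc] at hle
  have hch : (2 * n).choose 2 ≤ 2 * n ^ 2 := by
    rw [Nat.choose_two_right]
    have h2 : 2 * n * (2 * n - 1) = 2 * (n * (2 * n - 1)) := by ring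
    rw [h2, Nat.mul_div_cancel_left _ two_pos]
    calc n * (2 * n - 1) ≤ n * (2 * n) := Nat.mul_le_mul_left _ (Nat.sub_le _ _)
      _ = 2 * n ^ 2 := by ring
  calc Nat.card {M : Finset (Sym2 (Fin (2 * n))) // IsMatchingOf G M ∧ M.card = n - 1}
      ≤ (2 * n).choose 2 *
        Nat.card {M : Finset (Sym2 (Fin (2 * n))) // IsMatchingOf G M ∧ M.card = n} := hle
    _ ≤ 2 * n ^ 2 *
        Nat.card {M : Finset (Sym2 (Fin (2 * n))) // IsMatchingOf G M ∧ M.card = n} :=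
      Nat.mul_le_mul_right _ hch
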